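/- If Z is a random variable with E[exp(t(Z/σ)²)] ≤ c for some t ∈ (0, T] and constant c, and Y = θ + Z, then for the logistic weight ϕ defined by logit(ϕ) = logit(λ) + ½log(γ/(α+γ)) + (α/(2σ²))Y² with α ≤ 2t, one has, when θ = 0: E[ϕ] ≤ c·λ/(1−λ)·(γ/(α+γ))^{1/2}; in particular E[ϕ] = O(λ) as λ → 0. -/
import Mathlib


open MeasureTheory ProbabilityTheory Real

theorem expected_inclusion_weight_bound
    {Ω : Type*} [MeasureSpace Ω] [IsProbabilityMeasure (ℙ : Measure Ω)]
    (Z : Ω → ℝ) (hZ : Measurable Z)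
    (σ γ α lam t c : ℝ) (hσ : 0 < σ) (hγ : 0 < γ) (hα : 0 < α)
    (hlam0 : 0 < lam) (hlam1 : lam < 1) (ht : 0 < t) (hαt : α ≤ 2 * t) (hc : 1 ≤ c)
    (hint : Integrable (fun ω => Real.exp (t * (Z ω / σ) ^ 2)) ℙ)
    (hint2 : Integrable (fun ω => Real.exp ((α / 2) * (Z ω / σ) ^ 2)) ℙ)
    (hmgf : ∫ ω, Real.exp (t * (Z ω / σ) ^ 2) ∂ℙ ≤ c) :
    ∫ ω,
        (Real.exp (Real.log (lam / (1 - lam)) + (1 / 2) * Real.log (γ / (α + γ)) +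
            (α / (2 * σ ^ 2)) * (Z ω) ^ 2) /
          (1 + Real.exp (Real.log (lam / (1 - lam)) + (1 / 2) * Real.log (γ / (α + γ)) +
            (α / (2 * σ ^ 2)) * (Z ω) ^ 2))) ∂ℙ ≤
      c * (lam / (1 - lam)) * Real.sqrt (γ / (α + γ)) := by
  set L := lam / (1 - lam) with hL
  have hLpos : 0 < L := div_pos hlam0 (by linarith)
  have hupos : 0 < γ / (α + γ) := div_pos hγ (by linarith)
  set K := L * Real.sqrt (γ / (α + γ)) with hK
  have hKpos : 0 < K := mul_pos hLpos (Real.sqrt_pos.mpr hupos)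
  -- rewrite exponent
  have hexp : ∀ ω, Real.exp (Real.log L + (1 / 2) * Real.log (γ / (α + γ)) +
      (α / (2 * σ ^ 2)) * (Z ω) ^ 2) = K * Real.exp ((α / 2) * (Z ω / σ) ^ 2) := by
    intro ω
    rw [Real.exp_add, Real.exp_add, Real.exp_log hLpos]
    have h1 : Real.exp ((1 / 2) * Real.log (γ / (α + γ))) = Real.sqrt (γ / (α + γ)) := by
      rw [Real.sqrt_eq_rpow, Real.rpow_def_of_pos hupos]
      ring_nf
    have h2 : (α / (2 * σ ^ 2)) * (Z ω) ^ 2 = (α / 2) * (Z ω / σ) ^ 2 := by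
      field_simp
    rw [h1, h2, hK, mul_assoc]
  -- pointwise bound
  have hptwise : ∀ ω,
      Real.exp (Real.log L + (1 / 2) * Real.log (γ / (α + γ)) +
          (α / (2 * σ ^ 2)) * (Z ω) ^ 2) /
        (1 + Real.exp (Real.log L + (1 / 2) * Real.log (γ / (α + γ)) +
          (α / (2 * σ ^ 2)) * (Z ω) ^ 2)) ≤ K * Real.exp ((α / 2) * (Z ω / σ) ^ 2) := by
    intro ω
    rw [← hexp ω]
    exact div_le_self (Real.exp_nonneg _) (by linarith [Real.exp_pos (Real.log L + (1 / 2) * Real.log (γ / (α + γ)) + (α / (2 * σ ^ 2)) * (Z ω) ^ 2)])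
  have hg : Integrable (fun ω => K * Real.exp ((α / 2) * (Z ω / σ) ^ 2)) ℙ :=
    hint2.const_mul K
  have hfmeas : AEStronglyMeasurable (fun ω =>
      Real.exp (Real.log L + (1 / 2) * Real.log (γ / (α + γ)) +
          (α / (2 * σ ^ 2)) * (Z ω) ^ 2) /
        (1 + Real.exp (Real.log L + (1 / 2) * Real.log (γ / (α + γ)) +
          (α / (2 * σ ^ 2)) * (Z ω) ^ 2))) ℙ := by
    apply Measurable.aestronglyMeasurable
    fun_prop
  have hfnn : ∀ ω, 0 ≤ Real.exp (Real.log L + (1 / 2) * Real.log (γ / (α + γ)) +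
          (α / (2 * σ ^ 2)) * (Z ω) ^ 2) /
        (1 + Real.exp (Real.log L + (1 / 2) * Real.log (γ / (α + γ)) +
          (α / (2 * σ ^ 2)) * (Z ω) ^ 2)) := by
    intro ω
    positivity
  have hf : Integrable (fun ω =>
      Real.exp (Real.log L + (1 / 2) * Real.log (γ / (α + γ)) +
          (α / (2 * σ ^ 2)) * (Z ω) ^ 2) /
        (1 + Real.exp (Real.log L + (1 / 2) * Real.log (γ / (α + γ)) +
          (α / (2 * σ ^ 2)) * (Z ω) ^ 2))) ℙ := by
    refine hg.mono hfmeas (Filter.Eventually.of_forall fun ω => ?_)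
    rw [Real.norm_eq_abs, Real.norm_eq_abs, abs_of_nonneg (hfnn ω),
      abs_of_nonneg (by positivity)]
    exact hptwise ω
  calc ∫ ω, Real.exp (Real.log L + (1 / 2) * Real.log (γ / (α + γ)) +
          (α / (2 * σ ^ 2)) * (Z ω) ^ 2) /
        (1 + Real.exp (Real.log L + (1 / 2) * Real.log (γ / (α + γ)) +
          (α / (2 * σ ^ 2)) * (Z ω) ^ 2)) ∂ℙ
      ≤ ∫ ω, K * Real.exp ((α / 2) * (Z ω / σ) ^ 2) ∂ℙ :=
        integral_mono hf hg hptwise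
    _ = K * ∫ ω, Real.exp ((α / 2) * (Z ω / σ) ^ 2) ∂ℙ := integral_const_mul K _
    _ ≤ K * c := by
        apply mul_le_mul_of_nonneg_left _ hKpos.le
        calc ∫ ω, Real.exp ((α / 2) * (Z ω / σ) ^ 2) ∂ℙ
            ≤ ∫ ω, Real.exp (t * (Z ω / σ) ^ 2) ∂ℙ := by
              apply integral_mono hint2 hint
              intro ω
              apply Real.exp_le_exp.mpr
              apply mul_le_mul_of_nonneg_right (by linarith) (sq_nonneg _)
          _ ≤ c := hmgf
    _ = c * L * Real.sqrt (γ / (α + γ)) := by rw [hK]; ring
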